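/- Every contraction is a seminormal morphism: if f : Y → X is a dominant morphism of schemes such that the natural map O_X → f_*O_Y is an isomorphism, then the seminormalization of X in Y is X itself, i.e., sn_f : X^{sn,f} → X is an isomorphism. -/

import Mathlib

open AlgebraicGeometry CategoryTheory CategoryTheory.Limits

universe u

/-- A morphism of schemes is a universal homeomorphism if every base change of it is a
homeomorphism on underlying topological spaces. -/
def IsUniversalHomeomorphism {X Y : AlgebraicGeometry.Scheme.{u}} (f : X ⟶ Y) : Prop :=
  ∀ (Z : AlgebraicGeometry.Scheme.{u}) (g : Z ⟶ Y), IsHomeomorph (pullback.snd f g).base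

/-- A quasi-isomorphism is a universal homeomorphism inducing isomorphisms on all
residue fields. -/
def IsQuasiIsomorphism {X Y : AlgebraicGeometry.Scheme.{u}} (f : X ⟶ Y) : Prop :=
  IsUniversalHomeomorphism f ∧ ∀ x : X, IsIso (f.residueFieldMap x)

/-- The seminormalization of a dominant morphism `f : Y ⟶ X`: an integral
quasi-isomorphism `sn : Xsn ⟶ X` through which `f` factors, maximal with respect to this
property (any integral quasi-isomorphism `g : Z ⟶ X` factoring `f` receives a unique
morphism from `Xsn` over `X`). -/
structure SeminormalizationData {Y X : AlgebraicGeometry.Scheme.{u}} (f : Y ⟶ X) where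
  Xsn : AlgebraicGeometry.Scheme.{u}
  sn : Xsn ⟶ X
  integral : IsIntegralHom sn
  quasiIso : IsQuasiIsomorphism sn
  factors : ∃ h : Y ⟶ Xsn, h ≫ sn = f
  isMax : ∀ (Z : AlgebraicGeometry.Scheme.{u}) (g : Z ⟶ X), IsIntegralHom g →
    IsQuasiIsomorphism g → (∃ h : Y ⟶ Z, h ≫ g = f) → ∃! u : Xsn ⟶ Z, u ≫ g = sn

/-- A (dominant) morphism `f` is seminormal if its seminormalization `sn_f` is an
isomorphism. -/
def IsSeminormalMorphism {Y X : AlgebraicGeometry.Scheme.{u}} (f : Y ⟶ X) : Prop :=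
  ∃ d : SeminormalizationData f, IsIso d.sn

lemma affineOpens_isAffineOpen {X : AlgebraicGeometry.Scheme.{u}} (U : X.affineOpens) :
    IsAffineOpen U.1 :=
  U.2

instance {X : AlgebraicGeometry.Scheme.{u}} (U : X.affineOpens) : IsOpenImmersion U.2.fromSpec :=
  IsAffineOpen.isOpenImmersion_fromSpec _

section Retr

variable {Y X W : AlgebraicGeometry.Scheme.{u}} (g : W ⟶ X) (h : Y ⟶ W)

/-- The retraction `Γ(W, g⁻¹U) ⟶ Γ(X, U)` coming from a contraction `h ≫ g`. -/
noncomputable def retr (hc : ∀ U : X.Opens, IsIso ((h ≫ g).app U)) (U : X.Opens) :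
    Γ(W, g ⁻¹ᵁ U) ⟶ Γ(X, U) :=
  haveI := hc U
  h.appLE (g ⁻¹ᵁ U) ((h ≫ g) ⁻¹ᵁ U) (le_of_eq rfl) ≫ inv ((h ≫ g).app U)

lemma retr_retraction (hc : ∀ U : X.Opens, IsIso ((h ≫ g).app U)) (U : X.Opens) :
    g.app U ≫ retr g h hc U = 𝟙 _ := by
  haveI := hc U
  rw [retr, ← Category.assoc, g.app_eq_appLE, Scheme.Hom.appLE_comp_appLE,
    Scheme.Hom.appLE_eq_app, IsIso.hom_inv_id]

lemma retr_map (hc : ∀ U : X.Opens, IsIso ((h ≫ g).app U)) {V U : X.Opens} (hle : V ≤ U) :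
    retr g h hc U ≫ X.presheaf.map (homOfLE hle).op =
      W.presheaf.map ((TopologicalSpace.Opens.map g.base).map (homOfLE hle)).op ≫ retr g h hc V := by
  haveI := hc U
  haveI := hc V
  have nat : inv ((h ≫ g).app U) ≫ X.presheaf.map (homOfLE hle).op =
      Y.presheaf.map ((TopologicalSpace.Opens.map (h ≫ g).base).map (homOfLE hle)).op ≫ inv ((h ≫ g).app V) := by
    have nat' := Scheme.Hom.naturality (h ≫ g) (homOfLE hle).op
    simp only [Quiver.Hom.unop_op] at nat'
    rw [IsIso.inv_comp_eq, ← Category.assoc, ← nat', Category.assoc,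
      IsIso.hom_inv_id, Category.comp_id]
  rw [retr, retr, Category.assoc, nat, ← Category.assoc, Scheme.Hom.appLE_map,
    ← Category.assoc, Scheme.Hom.map_appLE]

end Retr

section Sect

variable {Y X W : AlgebraicGeometry.Scheme.{u}} (g : W ⟶ X) (h : Y ⟶ W) [IsAffineHom g]

/-- The local section of `g` over an affine open, coming from the retraction. -/
noncomputable def secPiece (hc : ∀ U : X.Opens, IsIso ((h ≫ g).app U)) (U : X.affineOpens) :
    Spec Γ(X, U.1) ⟶ W :=
  Spec.map (retr g h hc U.1) ≫ (U.2.preimage g).fromSpec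

lemma secPiece_comp (hc : ∀ U : X.Opens, IsIso ((h ≫ g).app U)) (U : X.affineOpens) :
    secPiece g h hc U ≫ g = U.2.fromSpec := by
  rw [secPiece, Category.assoc,
    ← IsAffineOpen.SpecMap_appLE_fromSpec g U.2 (U.2.preimage g) le_rfl,
    ← Category.assoc, ← Spec.map_comp, Scheme.Hom.appLE_eq_app, retr_retraction,
    Spec.map_id, Category.id_comp]

lemma map_secPiece (hc : ∀ U : X.Opens, IsIso ((h ≫ g).app U)) {V U : X.affineOpens}
    (hle : V.1 ≤ U.1) :
    Spec.map (X.presheaf.map (homOfLE hle).op) ≫ secPiece g h hc U = secPiece g h hc V := by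
  rw [secPiece, secPiece, ← Category.assoc, ← Spec.map_comp, retr_map g h hc hle,
    Spec.map_comp, Category.assoc,
    IsAffineOpen.map_fromSpec (U.2.preimage g) (V.2.preimage g)
      ((TopologicalSpace.Opens.map g.base).map (homOfLE hle)).op]

lemma secPiece_compat (hc : ∀ U : X.Opens, IsIso ((h ≫ g).app U)) (i j : X.affineOpens) :
    pullback.fst (affineOpens_isAffineOpen i).fromSpec (affineOpens_isAffineOpen j).fromSpec ≫ secPiece g h hc i =
      pullback.snd (affineOpens_isAffineOpen i).fromSpec (affineOpens_isAffineOpen j).fromSpec ≫ secPiece g h hc j := by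
  set c := pullback.fst (affineOpens_isAffineOpen i).fromSpec (affineOpens_isAffineOpen j).fromSpec ≫ (affineOpens_isAffineOpen i).fromSpec with hcdef
  haveI : IsOpenImmersion c := by rw [hcdef]; infer_instance
  have hrange : Set.range c.base = ↑(i.1 ⊓ j.1) := by
    rw [hcdef, IsOpenImmersion.range_pullback_to_base_of_left, (affineOpens_isAffineOpen i).range_fromSpec,
      (affineOpens_isAffineOpen j).range_fromSpec]
    rfl
  let 𝒱 := Scheme.Cover.mkOfCovers (P := @IsOpenImmersion)
    (X := pullback (affineOpens_isAffineOpen i).fromSpec (affineOpens_isAffineOpen j).fromSpec)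
    {O : X.affineOpens // O.1 ≤ i.1 ⊓ j.1}
    (fun O => Spec Γ(X, O.1.1))
    (fun O => IsOpenImmersion.lift c (affineOpens_isAffineOpen O.1).fromSpec
      (by rw [(affineOpens_isAffineOpen O.1).range_fromSpec, hrange]; exact O.2))
    (fun p => by
      have hx : c.base p ∈ (↑(i.1 ⊓ j.1) : Set X) := hrange ▸ Set.mem_range_self p
      obtain ⟨_, ⟨O, hO, rfl⟩, hxO, hOsub⟩ :=
        X.isBasis_affineOpens.exists_subset_of_mem_open hx (i.1 ⊓ j.1).2
      obtain ⟨y, hy⟩ : c.base p ∈ Set.range hO.fromSpec.base := hO.range_fromSpec.symm ▸ hxO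
      refine ⟨⟨⟨O, hO⟩, fun a ha => hOsub ha⟩, y, ?_⟩
      apply c.isOpenEmbedding.injective
      rw [← Scheme.Hom.comp_apply, IsOpenImmersion.lift_fac]
      exact hy)
    (fun O => by
      haveI : IsOpenImmersion (IsOpenImmersion.lift c (affineOpens_isAffineOpen O.1).fromSpec
          (by rw [(affineOpens_isAffineOpen O.1).range_fromSpec, hrange]; exact O.2) ≫ c) := by
        rw [IsOpenImmersion.lift_fac]; infer_instance
      exact IsOpenImmersion.of_comp _ c)
  apply 𝒱.hom_ext
  intro (O : {O : X.affineOpens // O.1 ≤ i.1 ⊓ j.1})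
  have h1 : 𝒱.f O ≫ pullback.fst (affineOpens_isAffineOpen i).fromSpec (affineOpens_isAffineOpen j).fromSpec =
      Spec.map (X.presheaf.map (homOfLE (le_trans O.2 inf_le_left)).op) := by
    refine (cancel_mono (affineOpens_isAffineOpen i).fromSpec).mp ?_
    simp only [Category.assoc, ← hcdef]
    show IsOpenImmersion.lift c (affineOpens_isAffineOpen O.1).fromSpec _ ≫ c = _
    rw [IsOpenImmersion.lift_fac]
    exact (IsAffineOpen.map_fromSpec (affineOpens_isAffineOpen i) (affineOpens_isAffineOpen O.1) (homOfLE (le_trans O.2 inf_le_left)).op).symm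
  have h2 : 𝒱.f O ≫ pullback.snd (affineOpens_isAffineOpen i).fromSpec (affineOpens_isAffineOpen j).fromSpec =
      Spec.map (X.presheaf.map (homOfLE (le_trans O.2 inf_le_right)).op) := by
    refine (cancel_mono (affineOpens_isAffineOpen j).fromSpec).mp ?_
    simp only [Category.assoc, ← pullback.condition, ← hcdef]
    show IsOpenImmersion.lift c (affineOpens_isAffineOpen O.1).fromSpec _ ≫ c = _
    rw [IsOpenImmersion.lift_fac]
    exact (IsAffineOpen.map_fromSpec (affineOpens_isAffineOpen j) (affineOpens_isAffineOpen O.1) (homOfLE (le_trans O.2 inf_le_right)).op).symm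
  simp only [← Category.assoc, h1, h2]
  exact (map_secPiece g h hc _).trans (map_secPiece g h hc _).symm

lemma exists_section (f : Y ⟶ X) (g' : W ⟶ X) [IsAffineHom g'] (h' : Y ⟶ W) (hh : h' ≫ g' = f)
    (hc : ∀ U : X.Opens, IsIso (f.app U)) : ∃ s : X ⟶ W, s ≫ g' = 𝟙 X := by
  subst hh
  let 𝒰 : X.OpenCover := Scheme.Cover.mkOfCovers (P := @IsOpenImmersion) X.affineOpens
    (fun U => Spec Γ(X, U.1)) (fun U => U.2.fromSpec)
    (fun x => by
      obtain ⟨_, ⟨V, hV, rfl⟩, hxV, -⟩ :=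
        X.isBasis_affineOpens.exists_subset_of_mem_open (Set.mem_univ x) isOpen_univ
      exact ⟨⟨V, hV⟩, (hV.range_fromSpec.symm ▸ hxV : x ∈ Set.range _)⟩)
  refine ⟨𝒰.glueMorphisms (fun U => secPiece g' h' hc U) (secPiece_compat g' h' hc),
    𝒰.hom_ext _ _ fun (U : X.affineOpens) => ?_⟩
  simp only [← Category.assoc]
  exact (congrArg (· ≫ g') (Scheme.Cover.ι_glueMorphisms 𝒰 _ _ U)).trans
    ((secPiece_comp g' h' hc U).trans (Category.comp_id _).symm)

end Sect

/-- Every contraction is seminormal: if `f : Y ⟶ X` is a dominant morphism of schemes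
such that the natural map `O_X → f_*O_Y` is an isomorphism (i.e. `Γ(X, U) → Γ(Y, f⁻¹U)`
is an isomorphism for all opens `U`), then the seminormalization of `X` in `Y` is `X`
itself, i.e. `sn_f : X^{sn,f} → X` is an isomorphism. -/


theorem contraction_isSeminormal {Y X : AlgebraicGeometry.Scheme.{u}}
    (f : Y ⟶ X) [IsDominant f]
    (hc : ∀ U : X.Opens, IsIso (f.app U)) :
    ∀ d : SeminormalizationData f, IsIso d.sn := by
  intro d
  obtain ⟨h, hh⟩ := d.factors
  haveI : IsIntegralHom d.sn := d.integral
  obtain ⟨s, hs⟩ := exists_section f d.sn h hh hc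
  obtain ⟨u, hu, huniq⟩ := d.isMax d.Xsn d.sn d.integral d.quasiIso ⟨h, hh⟩
  have h1 : d.sn ≫ s = 𝟙 d.Xsn := by
    rw [huniq (d.sn ≫ s) (show (d.sn ≫ s) ≫ d.sn = d.sn by rw [Category.assoc, hs, Category.comp_id]),
      ← huniq (𝟙 d.Xsn) (show 𝟙 d.Xsn ≫ d.sn = d.sn from Category.id_comp _)]
  exact ⟨⟨s, h1, hs⟩⟩
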